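/- Let q be an odd prime power, G = GL(2,F_q), and U = {(1 b; 0 1) : b ∈ F_q} the unipotent subgroup. Then (G,U,χ) is a multiplicity-free triple for every nontrivial character χ of U, but (G,U) is not a Gelfand pair: the induced representation Ind_U^G χ₀ of the trivial character χ₀ of U is not multiplicity-free — there exists an irreducible representation of G occurring in Ind_U^G χ₀ with multiplicity 2. -/

import Mathlib

open scoped BigOperators ComplexConjugate Classical

set_option linter.unusedSectionVars false
set_option synthInstance.maxHeartbeats 1000000
set_option maxHeartbeats 1000000

noncomputable section

namespace GLMF

/-- Left translation of functions on `G`: `(translate h f) g = f (h⁻¹ * g)`. -/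
def translate {G A : Type} [Group G] (h : G) (f : G → A) : G → A := fun g => f (h⁻¹ * g)

/-- Irreducibility of a representation. -/
def IsIrreducibleRep {H W : Type} [Group H] [AddCommGroup W] [Module ℂ W]
    (ρ : H →* (W ≃ₗ[ℂ] W)) : Prop :=
  (⊥ : Submodule ℂ W) ≠ ⊤ ∧
    ∀ p : Submodule ℂ W, (∀ (h : H) (x : W), x ∈ p → ρ h x ∈ p) → p = ⊥ ∨ p = ⊤

/-- The space of the representation of `G` induced by a one-dimensional character `χ` of the
subgroup `K`: functions `f : G → ℂ` with `f (g k) = χ(k)⁻¹ f g`. -/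
def indChar {G : Type} [Group G] (K : Subgroup G) (χ : ↥K →* ℂ) : Submodule ℂ (G → ℂ) where
  carrier := {f | ∀ (g : G) (k : K), f (g * (k : G)) = (χ k)⁻¹ * f g}
  add_mem' := by
    intro a b ha hb g k
    simp only [Pi.add_apply, ha g k, hb g k, mul_add]
  zero_mem' := by intro g k; simp
  smul_mem' := by
    intro c a ha g k
    simp only [Pi.smul_apply, smul_eq_mul, ha g k]
    ring

/-- The space `Hom_G(W, Ind_K^G χ)` of `G`-equivariant linear maps from `(σ, W)` to the
representation induced by the character `χ`. -/
def homGIndChar {G : Type} [Group G] (K : Subgroup G) (χ : ↥K →* ℂ)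
    {W : Type} [AddCommGroup W] [Module ℂ W] (σ : G →* (W ≃ₗ[ℂ] W)) :
    Submodule ℂ (W →ₗ[ℂ] (G → ℂ)) where
  carrier := {A | (∀ w : W, A w ∈ indChar K χ) ∧
    ∀ (g : G) (w : W), A (σ g w) = translate g (A w)}
  add_mem' := by
    rintro A B ⟨hA₁, hA₂⟩ ⟨hB₁, hB₂⟩
    refine ⟨fun w => (indChar K χ).add_mem (hA₁ w) (hB₁ w), fun g w => ?_⟩
    funext x
    simp [translate, hA₂ g w, hB₂ g w]
  zero_mem' := by
    refine ⟨fun w => (indChar K χ).zero_mem, fun g w => ?_⟩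
    funext x
    simp [translate]
  smul_mem' := by
    rintro c A ⟨hA₁, hA₂⟩
    refine ⟨fun w => (indChar K χ).smul_mem c (hA₁ w), fun g w => ?_⟩
    funext x
    simp [translate, hA₂ g w]

/-- The representation of `G` induced by the one-dimensional character `χ` of `K ≤ G` is
multiplicity-free: every irreducible representation of `G` occurs in it with multiplicity at
most `1`. -/
def IsMultFreeChar {G : Type} [Group G] (K : Subgroup G) (χ : ↥K →* ℂ) : Prop :=
  ∀ (W : Type) [AddCommGroup W] [Module ℂ W] [FiniteDimensional ℂ W]
    (σ : G →* (W ≃ₗ[ℂ] W)), IsIrreducibleRep σ →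
      Module.finrank ℂ ↥(homGIndChar K χ σ) ≤ 1

variable (F : Type) [Field F] [Fintype F] [DecidableEq F]

/-- The unipotent subgroup `U = {(1 b; 0 1) : b ∈ F}` of `GL(2,F)`. -/
def unipotent : Subgroup (Matrix.GeneralLinearGroup (Fin 2) F) where
  carrier := {g | ∃ b : F, (g : Matrix (Fin 2) (Fin 2) F) = !![1, b; 0, 1]}
  one_mem' := ⟨0, by simp [Matrix.one_fin_two]⟩
  mul_mem' := by
    rintro x y ⟨b, hx⟩ ⟨d, hy⟩
    refine ⟨d + b, ?_⟩
    show ((x * y : Matrix.GeneralLinearGroup (Fin 2) F) : Matrix (Fin 2) (Fin 2) F) = _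
    rw [Units.val_mul, hx, hy, Matrix.mul_fin_two]
    norm_num
  inv_mem' := by
    rintro x ⟨b, hx⟩
    refine ⟨-b, ?_⟩
    have h : (x : Matrix (Fin 2) (Fin 2) F) * !![1, -b; 0, 1] = 1 := by
      rw [hx, Matrix.mul_fin_two]
      norm_num
      exact Matrix.one_fin_two.symm
    exact Units.inv_eq_of_mul_eq_one_right h

/-- The Cartan subgroup `C = {(a ηb; b a)}` of `GL(2,F)`, where `η` is a fixed generator of
the multiplicative group `F*`. -/
def cartan (eta : F) : Subgroup (Matrix.GeneralLinearGroup (Fin 2) F) where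
  carrier := {g | ∃ a b : F, (g : Matrix (Fin 2) (Fin 2) F) = !![a, eta * b; b, a]}
  one_mem' := ⟨1, 0, by rw [mul_zero]; exact Matrix.one_fin_two⟩
  mul_mem' := by
    rintro x y ⟨a, b, hx⟩ ⟨c, d, hy⟩
    refine ⟨a * c + eta * b * d, a * d + b * c, ?_⟩
    show ((x * y : Matrix.GeneralLinearGroup (Fin 2) F) : Matrix (Fin 2) (Fin 2) F) = _
    rw [Units.val_mul, hx, hy, Matrix.mul_fin_two]
    congr 1 <;> ring
  inv_mem' := by
    rintro x ⟨a, b, hx⟩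
    have hdet : a * a - eta * b * b ≠ 0 := by
      have hu : IsUnit ((x : Matrix (Fin 2) (Fin 2) F)).det :=
        (Matrix.isUnit_iff_isUnit_det _).mp x.isUnit
      rw [hx, Matrix.det_fin_two_of] at hu
      simpa [isUnit_iff_ne_zero, mul_comm, mul_assoc, mul_left_comm, sub_eq_iff_eq_add]
        using hu
    set D : F := a * a - eta * b * b with hD
    refine ⟨a / D, -(b / D), ?_⟩
    have h : (x : Matrix (Fin 2) (Fin 2) F) * !![a / D, eta * -(b / D); -(b / D), a / D] = 1 := by
      rw [hx, Matrix.mul_fin_two]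
      have : ∀ u v w z : F, u = 1 → v = 0 → w = 0 → z = 1 → !![u, v; w, z] = 1 := by
        rintro u v w z rfl rfl rfl rfl
        exact Matrix.one_fin_two.symm
      refine this _ _ _ _ ?_ ?_ ?_ ?_ <;> field_simp <;> ring
    exact Units.inv_eq_of_mul_eq_one_right h

/-- The embedding `GL(2,F) → GL(2,K)` induced by a field extension `F ⊆ K`. -/
def glEmbed (K : Type) [Field K] [Fintype K] [DecidableEq K] [Algebra F K] :
    Matrix.GeneralLinearGroup (Fin 2) F →* Matrix.GeneralLinearGroup (Fin 2) K :=
  Units.map ((algebraMap F K).mapMatrix).toMonoidHom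

/-- A bundled finite-dimensional complex representation of a group `G`. -/
structure RepWitness (G : Type) [Group G] where
  W : Type
  [acg : AddCommGroup W]
  [mod : Module ℂ W]
  [fd : FiniteDimensional ℂ W]
  σ : G →* (W ≃ₗ[ℂ] W)

attribute [instance] RepWitness.acg RepWitness.mod RepWitness.fd

/-! ### Abstract machinery -/

section Abstract

variable {G : Type} [Group G]

theorem translate_translate (a b : G) (f : G → ℂ) :
    translate a (translate b f) = translate (a * b) f := by
  funext x; simp [translate, mul_assoc]

theorem translate_one (f : G → ℂ) : translate (1 : G) f = f := by
  funext x; simp [translate]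

/-- translation as a linear map on functions -/
def translateLM (h : G) : (G → ℂ) →ₗ[ℂ] (G → ℂ) where
  toFun := translate h
  map_add' f g := rfl
  map_smul' c f := rfl

theorem translate_mem_indChar (K : Subgroup G) (χ : ↥K →* ℂ) (h : G) {f : G → ℂ}
    (hf : f ∈ indChar K χ) : translate h f ∈ indChar K χ := by
  intro g k
  simp only [translate]
  rw [← mul_assoc]
  exact hf _ k

/-- The left regular representation of `G` on `indChar K χ`. -/
def indRep (K : Subgroup G) (χ : ↥K →* ℂ) : G →* (↥(indChar K χ) ≃ₗ[ℂ] ↥(indChar K χ)) where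
  toFun h :=
    { toFun := fun f => ⟨translate h f.1, translate_mem_indChar K χ h f.2⟩
      invFun := fun f => ⟨translate h⁻¹ f.1, translate_mem_indChar K χ h⁻¹ f.2⟩
      map_add' := fun f g => by ext x; rfl
      map_smul' := fun c f => by ext x; rfl
      left_inv := fun f => by
        ext x
        simp [translate_translate, translate_one]
      right_inv := fun f => by
        ext x
        simp [translate_translate, translate_one] }
  map_one' := by
    ext f x
    show translate (1:G) f.1 x = _
    rw [translate_one]
    rfl
  map_mul' g h := by
    ext f x
    show (translate (g * h) f.1) x = _
    rw [← translate_translate]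
    rfl

theorem indRep_apply (K : Subgroup G) (χ : ↥K →* ℂ) (h : G) (f : ↥(indChar K χ)) :
    ((indRep K χ h f : ↥(indChar K χ)) : G → ℂ) = translate h f.1 := rfl

theorem sigma_mul_apply {W : Type} [AddCommGroup W] [Module ℂ W]
    (σ : G →* (W ≃ₗ[ℂ] W)) (g h : G) (w : W) : σ (g * h) w = σ g (σ h w) := by
  rw [map_mul]; rfl

theorem sigma_one_apply {W : Type} [AddCommGroup W] [Module ℂ W]
    (σ : G →* (W ≃ₗ[ℂ] W)) (w : W) : σ (1 : G) w = w := by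
  rw [map_one]; rfl

/-- Schur's lemma. -/
theorem schur {W : Type} [AddCommGroup W] [Module ℂ W] [FiniteDimensional ℂ W]
    (σ : G →* (W ≃ₗ[ℂ] W)) (hirr : IsIrreducibleRep σ) (T : W →ₗ[ℂ] W)
    (hT : ∀ (g : G) (w : W), T (σ g w) = σ g (T w)) : ∃ c : ℂ, ∀ w, T w = c • w := by
  have hnt : Nontrivial W := by
    by_contra hn
    have : Subsingleton W := not_nontrivial_iff_subsingleton.mp hn
    exact hirr.1 (Subsingleton.elim _ _)
  obtain ⟨c, hc⟩ := Module.End.exists_eigenvalue (T : Module.End ℂ W)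
  refine ⟨c, ?_⟩
  have hker : ∀ (g : G) (x : W), x ∈ LinearMap.ker (T - c • LinearMap.id) →
      σ g x ∈ LinearMap.ker (T - c • LinearMap.id) := by
    intro g x hx
    simp only [LinearMap.mem_ker, LinearMap.sub_apply, LinearMap.smul_apply,
      LinearMap.id_apply] at hx ⊢
    rw [sub_eq_zero] at hx ⊢
    rw [hT, hx]
    exact map_smul (σ g) c x
  rcases hirr.2 _ hker with h | h
  · exfalso
    have : Module.End.eigenspace (T : Module.End ℂ W) c ≠ ⊥ := hc
    apply this
    rw [Module.End.eigenspace_def]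
    rw [eq_bot_iff]
    intro x hx
    have : x ∈ LinearMap.ker (T - c • LinearMap.id) := by
      simpa using hx
    rw [h] at this
    exact this
  · intro w
    have : w ∈ LinearMap.ker (T - c • LinearMap.id) := by rw [h]; trivial
    simpa [sub_eq_zero] using this

end Abstract
section Hecke

variable {G : Type} [Group G] (U : Subgroup G) (χ : ↥U →* ℂ)

theorem chi_ne_zero (k : ↥U) : χ k ≠ 0 := by
  intro h0
  have h1 : χ k * χ k⁻¹ = 1 := by rw [← map_mul]; simp
  rw [h0, zero_mul] at h1
  exact zero_ne_one h1

theorem chi_inv (k : ↥U) : χ k⁻¹ = (χ k)⁻¹ :=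
  eq_inv_of_mul_eq_one_left (by rw [← map_mul]; simp)

/-- The set of `χ`-bi-equivariant functions on `G` (the Hecke algebra). -/
def Hset : Set (G → ℂ) :=
  {φ | (∀ (g : G) (k : ↥U), φ (g * ↑k) = (χ k)⁻¹ * φ g) ∧
    (∀ (g : G) (k : ↥U), φ (↑k * g) = (χ k)⁻¹ * φ g)}

/-- The canonical generator of `Ind_U^G χ`, supported on `U`. -/
def fchi : G → ℂ := fun g => if h : g ∈ U then (χ ⟨g, h⟩)⁻¹ else 0

theorem fchi_mem : fchi U χ ∈ indChar U χ := by
  intro g k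
  by_cases h : g ∈ U
  · have hgk : g * ↑k ∈ U := U.mul_mem h k.2
    simp only [fchi, dif_pos h, dif_pos hgk]
    have he : (⟨g * ↑k, hgk⟩ : ↥U) = ⟨g, h⟩ * k := by ext; rfl
    rw [he, map_mul, mul_inv, mul_comm]
  · have hgk : g * ↑k ∉ U := by
      intro hm
      have h2 : g * ↑k * (↑k)⁻¹ ∈ U := U.mul_mem hm (U.inv_mem k.2)
      exact h (by simpa using h2)
    simp [fchi, dif_neg h, dif_neg hgk]

theorem fchi_left (k : ↥U) (g : G) : fchi U χ (↑k * g) = (χ k)⁻¹ * fchi U χ g := by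
  by_cases h : g ∈ U
  · have hkg : ↑k * g ∈ U := U.mul_mem k.2 h
    simp only [fchi, dif_pos h, dif_pos hkg]
    have he : (⟨↑k * g, hkg⟩ : ↥U) = k * ⟨g, h⟩ := by ext; rfl
    rw [he, map_mul, mul_inv]
  · have hkg : ↑k * g ∉ U := by
      intro hm
      have h2 : (↑k)⁻¹ * (↑k * g) ∈ U := U.mul_mem (U.inv_mem k.2) hm
      exact h (by simpa using h2)
    simp [fchi, dif_neg h, dif_neg hkg]

/-- `fchi` as an element of the induced representation. -/
def feelt : ↥(indChar U χ) := ⟨fchi U χ, fchi_mem U χ⟩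

variable [Fintype G]

theorem expansion {f : G → ℂ} (hf : f ∈ indChar U χ) (x : G) :
    ∑ g : G, f g * fchi U χ (g⁻¹ * x) = (Fintype.card ↥U : ℂ) * f x := by
  have step : ∀ g : G, f g * fchi U χ (g⁻¹ * x) = if g⁻¹ * x ∈ U then f x else 0 := by
    intro g
    by_cases h : g⁻¹ * x ∈ U
    · rw [if_pos h]
      simp only [fchi, dif_pos h]
      have hx : f x = f (g * ((⟨g⁻¹ * x, h⟩ : ↥U) : G)) := by
        congr 1
        group
      rw [hx, hf g ⟨g⁻¹ * x, h⟩, mul_comm]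
    · rw [if_neg h]
      simp [fchi, dif_neg h]
  rw [Finset.sum_congr rfl (fun g _ => step g), Finset.sum_ite, Finset.sum_const,
    Finset.sum_const_zero, add_zero, nsmul_eq_mul]
  congr 1
  rw [← Fintype.card_subtype]
  norm_cast
  apply Fintype.card_congr
  exact
    { toFun := fun g => ⟨g.1⁻¹ * x, g.2⟩
      invFun := fun u => ⟨x * (↑u)⁻¹, by
        have : (x * (↑u)⁻¹)⁻¹ * x = ↑u := by group
        rw [this]; exact u.2⟩
      left_inv := fun g => by
        ext
        group
      right_inv := fun u => by
        ext
        group }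

/-- Equivariance of an endomorphism of the induced representation. -/
def IsEquivariant (E : ↥(indChar U χ) →ₗ[ℂ] ↥(indChar U χ)) : Prop :=
  ∀ (g : G) (f : ↥(indChar U χ)), E (indRep U χ g f) = indRep U χ g (E f)

theorem lam_feelt (k : ↥U) : indRep U χ (↑k) (feelt U χ) = χ k • feelt U χ := by
  apply Subtype.ext
  funext x
  show fchi U χ ((↑k)⁻¹ * x) = χ k * fchi U χ x
  have h1 : ((↑k)⁻¹ : G) = ((k⁻¹ : ↥U) : G) := rfl
  rw [h1, fchi_left U χ k⁻¹ x, chi_inv, inv_inv]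

theorem phi_mem_Hset (E : ↥(indChar U χ) →ₗ[ℂ] ↥(indChar U χ)) (hE : IsEquivariant U χ E) :
    ((E (feelt U χ) : ↥(indChar U χ)) : G → ℂ) ∈ Hset U χ := by
  constructor
  · exact (E (feelt U χ)).2
  · intro g k
    have h1 : indRep U χ (↑k) (E (feelt U χ)) = χ k • E (feelt U χ) := by
      rw [← hE ↑k, lam_feelt, map_smul]
    have h2 : ∀ y : G, ((E (feelt U χ) : ↥(indChar U χ)) : G → ℂ) ((↑k)⁻¹ * y)
        = χ k * ((E (feelt U χ) : ↥(indChar U χ)) : G → ℂ) y := by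
      intro y
      have := congrArg Subtype.val h1
      exact congrFun this y
    have h3 := h2 (↑k * g)
    rw [inv_mul_cancel_left] at h3
    rw [h3, ← mul_assoc, inv_mul_cancel₀ (chi_ne_zero U χ k), one_mul]

theorem decompose (f : ↥(indChar U χ)) :
    (Fintype.card ↥U : ℂ) • f = ∑ g : G, (f : G → ℂ) g • indRep U χ g (feelt U χ) := by
  apply Subtype.ext
  have hcoe : ((∑ g : G, (f : G → ℂ) g • indRep U χ g (feelt U χ) : ↥(indChar U χ)) : G → ℂ)
      = ∑ g : G, (f : G → ℂ) g • (translate g (fchi U χ)) := by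
    have h2 := map_sum ((indChar U χ).subtype)
      (fun g : G => (f : G → ℂ) g • indRep U χ g (feelt U χ)) Finset.univ
    simpa [indRep_apply, feelt] using h2
  rw [hcoe]
  funext x
  have := expansion U χ f.2 x
  simpa [smul_eq_mul, mul_comm, translate] using this.symm

theorem opExpand (E : ↥(indChar U χ) →ₗ[ℂ] ↥(indChar U χ)) (hE : IsEquivariant U χ E)
    (f : ↥(indChar U χ)) :
    (Fintype.card ↥U : ℂ) • E f = ∑ g : G, (f : G → ℂ) g • indRep U χ g (E (feelt U χ)) := by
  rw [← map_smul, decompose, map_sum]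
  congr 1
  funext g
  rw [map_smul, hE]
theorem S_mem_Hset (φ φ' : G → ℂ) (hφ : φ ∈ Hset U χ) (hφ' : φ' ∈ Hset U χ) :
    (fun x => ∑ g : G, φ' g * φ (g⁻¹ * x)) ∈ Hset U χ := by
  constructor
  · intro x k
    show ∑ g : G, φ' g * φ (g⁻¹ * (x * ↑k)) = (χ k)⁻¹ * ∑ g : G, φ' g * φ (g⁻¹ * x)
    have h : ∀ g : G, φ' g * φ (g⁻¹ * (x * ↑k)) = (χ k)⁻¹ * (φ' g * φ (g⁻¹ * x)) := by
      intro g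
      rw [← mul_assoc g⁻¹ x ↑k, hφ.1 (g⁻¹ * x) k]
      ring
    rw [Finset.sum_congr rfl (fun g _ => h g), ← Finset.mul_sum]
  · intro x k
    show ∑ g : G, φ' g * φ (g⁻¹ * (↑k * x)) = (χ k)⁻¹ * ∑ g : G, φ' g * φ (g⁻¹ * x)
    rw [Finset.mul_sum]
    apply Fintype.sum_equiv (Equiv.mulLeft ((↑k : G)⁻¹))
    intro g
    show φ' g * φ (g⁻¹ * (↑k * x)) = (χ k)⁻¹ * (φ' ((↑k)⁻¹ * g) * φ (((↑k)⁻¹ * g)⁻¹ * x))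
    have h1 : (((↑k : G))⁻¹ * g)⁻¹ * x = g⁻¹ * (↑k * x) := by group
    have h3 := hφ'.2 g k⁻¹
    rw [chi_inv U χ, inv_inv] at h3
    have hco : ((k⁻¹ : ↥U) : G) = (↑k)⁻¹ := rfl
    rw [hco] at h3
    rw [h1, h3]
    have hne := chi_ne_zero U χ k
    field_simp

theorem S_symm (τ : G → G) (hanti : ∀ x y, τ (x * y) = τ y * τ x)
    (hinv : ∀ x, τ (τ x) = x) (hfix : ∀ φ ∈ Hset U χ, ∀ g, φ (τ g) = φ g)
    (φ φ' : G → ℂ) (hφ : φ ∈ Hset U χ) (hφ' : φ' ∈ Hset U χ) (x : G) :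
    ∑ g : G, φ' g * φ (g⁻¹ * x) = ∑ g : G, φ g * φ' (g⁻¹ * x) := by
  have hτ1 : τ 1 = 1 := by
    have h := hanti 1 1
    rw [mul_one] at h
    exact (mul_eq_left.mp h.symm)
  have hτinv : ∀ g : G, τ g⁻¹ = (τ g)⁻¹ := by
    intro g
    apply eq_inv_of_mul_eq_one_left
    rw [← hanti, mul_inv_cancel, hτ1]
  have hS := hfix _ (S_mem_Hset U χ φ φ' hφ hφ') x
  calc ∑ g : G, φ' g * φ (g⁻¹ * x)
      = ∑ g : G, φ' g * φ (g⁻¹ * τ x) := hS.symm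
    _ = ∑ g : G, φ' g * φ (x * g⁻¹) := by
        refine (Fintype.sum_equiv (⟨τ, τ, hinv, hinv⟩ : G ≃ G)
          (fun g => φ' g * φ (x * g⁻¹)) (fun g => φ' g * φ (g⁻¹ * τ x)) ?_).symm
        intro g
        show φ' g * φ (x * g⁻¹) = φ' (τ g) * φ ((τ g)⁻¹ * τ x)
        rw [hfix φ' hφ' g]
        congr 1
        rw [← hτinv, ← hanti, hfix φ hφ]
    _ = ∑ g : G, φ g * φ' (g⁻¹ * x) := by
        refine (Fintype.sum_equiv (⟨fun m => m⁻¹ * x, fun g => x * g⁻¹, ?_, ?_⟩ : G ≃ G)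
          (fun m => φ m * φ' (m⁻¹ * x)) (fun g => φ' g * φ (x * g⁻¹)) ?_).symm
        · intro m
          show x * (m⁻¹ * x)⁻¹ = m
          group
        · intro g
          show (x * g⁻¹)⁻¹ * x = g
          group
        · intro m
          show φ m * φ' (m⁻¹ * x) = φ' (m⁻¹ * x) * φ (x * (m⁻¹ * x)⁻¹)
          have h2 : x * (m⁻¹ * x)⁻¹ = m := by group
          rw [h2, mul_comm]

/-- Commutativity of equivariant endomorphisms, given a compatible anti-involution. -/
theorem comm_of_tau (τ : G → G) (hanti : ∀ x y, τ (x * y) = τ y * τ x)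
    (hinv : ∀ x, τ (τ x) = x) (hfix : ∀ φ ∈ Hset U χ, ∀ g, φ (τ g) = φ g)
    (E E' : ↥(indChar U χ) →ₗ[ℂ] ↥(indChar U χ))
    (hE : IsEquivariant U χ E) (hE' : IsEquivariant U χ E') (f : ↥(indChar U χ)) :
    E (E' f) = E' (E f) := by
  have hUcard : (Fintype.card ↥U : ℂ) ≠ 0 := Nat.cast_ne_zero.mpr Fintype.card_ne_zero
  set φ : G → ℂ := ((E (feelt U χ) : ↥(indChar U χ)) : G → ℂ) with hφdef
  set φ' : G → ℂ := ((E' (feelt U χ) : ↥(indChar U χ)) : G → ℂ) with hφ'def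
  have hφ : φ ∈ Hset U χ := phi_mem_Hset U χ E hE
  have hφ' : φ' ∈ Hset U χ := phi_mem_Hset U χ E' hE'
  have hkey : E (E' (feelt U χ)) = E' (E (feelt U χ)) := by
    have h1 : (Fintype.card ↥U : ℂ) • E (E' (feelt U χ))
        = ∑ g : G, φ' g • indRep U χ g (E (feelt U χ)) := opExpand U χ E hE _
    have h2 : (Fintype.card ↥U : ℂ) • E' (E (feelt U χ))
        = ∑ g : G, φ g • indRep U χ g (E' (feelt U χ)) := opExpand U χ E' hE' _
    apply smul_right_injective _ hUcard
    show (Fintype.card ↥U : ℂ) • E (E' (feelt U χ)) = (Fintype.card ↥U : ℂ) • E' (E (feelt U χ))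
    rw [h1, h2]
    apply Subtype.ext
    have hc1 := map_sum ((indChar U χ).subtype)
      (fun g : G => φ' g • indRep U χ g (E (feelt U χ))) Finset.univ
    have hc2 := map_sum ((indChar U χ).subtype)
      (fun g : G => φ g • indRep U χ g (E' (feelt U χ))) Finset.univ
    simp only [Submodule.coe_subtype] at hc1 hc2
    show ((∑ g : G, φ' g • indRep U χ g (E (feelt U χ)) : ↥(indChar U χ)) : G → ℂ) = _
    rw [hc1, hc2]
    funext x
    have hs := S_symm U χ τ hanti hinv hfix φ φ' hφ hφ' x
    simpa [indRep_apply, translate, smul_eq_mul] using hs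
  -- conclude for general f
  apply smul_right_injective _ hUcard
  show (Fintype.card ↥U : ℂ) • E (E' f) = (Fintype.card ↥U : ℂ) • E' (E f)
  have hEE' : IsEquivariant U χ (E ∘ₗ E') := by
    intro g f0
    simp only [LinearMap.comp_apply, hE' g f0, hE g]
  have hE'E : IsEquivariant U χ (E' ∘ₗ E) := by
    intro g f0
    simp only [LinearMap.comp_apply, hE g f0, hE' g]
  have h1 := opExpand U χ (E ∘ₗ E') hEE' f
  have h2 := opExpand U χ (E' ∘ₗ E) hE'E f
  simp only [LinearMap.comp_apply] at h1 h2
  rw [h1, h2, hkey]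
theorem claim_smul {W : Type} [AddCommGroup W] [Module ℂ W] [FiniteDimensional ℂ W]
    (σ : G →* (W ≃ₗ[ℂ] W)) (hirr : IsIrreducibleRep σ)
    (hcomm : ∀ (E E' : ↥(indChar U χ) →ₗ[ℂ] ↥(indChar U χ)),
      IsEquivariant U χ E → IsEquivariant U χ E' → ∀ f, E (E' f) = E' (E f))
    (A B : W →ₗ[ℂ] (G → ℂ)) (hA : A ∈ homGIndChar U χ σ) (hB : B ∈ homGIndChar U χ σ)
    (hA0 : A ≠ 0) : ∃ c : ℂ, B = c • A := by
  have hGcard : (Fintype.card G : ℂ) ≠ 0 := Nat.cast_ne_zero.mpr Fintype.card_ne_zero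
  -- A is injective
  have hkerinv : ∀ (g : G) (x : W), x ∈ LinearMap.ker A → σ g x ∈ LinearMap.ker A := by
    intro g x hx
    rw [LinearMap.mem_ker] at hx ⊢
    rw [hA.2 g x, hx]
    funext y
    simp [translate]
  have hker : LinearMap.ker A = ⊥ := by
    rcases hirr.2 _ hkerinv with h | h
    · exact h
    · exact absurd (LinearMap.ker_eq_top.mp h) hA0
  obtain ⟨p, hp⟩ := A.exists_leftInverse_of_injective hker
  have hpA : ∀ x : W, p (A x) = x := fun x => LinearMap.ext_iff.mp hp x
  -- averaged projection
  set π : (G → ℂ) →ₗ[ℂ] W :=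
    (Fintype.card G : ℂ)⁻¹ • ∑ g : G, ((σ g : W ≃ₗ[ℂ] W) : W →ₗ[ℂ] W) ∘ₗ p ∘ₗ translateLM g⁻¹
    with hπdef
  have hπA : ∀ w : W, π (A w) = w := by
    intro w
    rw [hπdef]
    simp only [LinearMap.smul_apply, LinearMap.sum_apply, LinearMap.comp_apply]
    have hterm : ∀ g : G, ((σ g : W ≃ₗ[ℂ] W) : W →ₗ[ℂ] W) (p (translateLM g⁻¹ (A w))) = w := by
      intro g
      have h1 : translateLM g⁻¹ (A w) = A (σ g⁻¹ w) := by
        show translate g⁻¹ (A w) = A (σ g⁻¹ w)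
        rw [hA.2 g⁻¹ w]
      rw [h1, hpA]
      show σ g (σ g⁻¹ w) = w
      rw [← sigma_mul_apply, mul_inv_cancel, sigma_one_apply]
    rw [Finset.sum_congr rfl (fun g _ => hterm g), Finset.sum_const, Finset.card_univ,
      ← Nat.cast_smul_eq_nsmul ℂ, smul_smul, inv_mul_cancel₀ hGcard, one_smul]
  have hπT : ∀ (h : G) (f : G → ℂ), π (translate h f) = σ h (π f) := by
    intro h f
    rw [hπdef]
    simp only [LinearMap.smul_apply, LinearMap.sum_apply, LinearMap.comp_apply]
    rw [map_smul]
    congr 1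
    rw [map_sum]
    apply Fintype.sum_equiv (Equiv.mulLeft h⁻¹)
    intro x
    show ((σ x : W ≃ₗ[ℂ] W) : W →ₗ[ℂ] W) (p (translateLM x⁻¹ (translate h f)))
      = ((σ h : W ≃ₗ[ℂ] W) : W →ₗ[ℂ] W)
          (((σ (h⁻¹ * x) : W ≃ₗ[ℂ] W) : W →ₗ[ℂ] W) (p (translateLM (h⁻¹ * x)⁻¹ f)))
    have e1 : translateLM x⁻¹ (translate h f) = translate (x⁻¹ * h) f := by
      show translate x⁻¹ (translate h f) = translate (x⁻¹ * h) f
      rw [translate_translate]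
    have e2 : ((h⁻¹ * x)⁻¹ : G) = x⁻¹ * h := by group
    have e3 : translateLM (h⁻¹ * x)⁻¹ f = translate (x⁻¹ * h) f := by
      show translate (h⁻¹ * x)⁻¹ f = translate (x⁻¹ * h) f
      rw [e2]
    rw [e1, e3]
    show σ x (p (translate (x⁻¹ * h) f)) = σ h (σ (h⁻¹ * x) (p (translate (x⁻¹ * h) f)))
    rw [← sigma_mul_apply, mul_inv_cancel_left]
  -- the two endomorphisms
  have hmemA : ∀ f : G → ℂ, A (π f) ∈ indChar U χ := fun f => hA.1 _
  have hmemB : ∀ f : G → ℂ, B (π f) ∈ indChar U χ := fun f => hB.1 _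
  set EA : ↥(indChar U χ) →ₗ[ℂ] ↥(indChar U χ) :=
    { toFun := fun f => ⟨A (π f.1), hmemA f.1⟩
      map_add' := fun f f' => by apply Subtype.ext; simp
      map_smul' := fun c f => by apply Subtype.ext; simp } with hEAdef
  set EB : ↥(indChar U χ) →ₗ[ℂ] ↥(indChar U χ) :=
    { toFun := fun f => ⟨B (π f.1), hmemB f.1⟩
      map_add' := fun f f' => by apply Subtype.ext; simp
      map_smul' := fun c f => by apply Subtype.ext; simp } with hEBdef
  have hEAeq : IsEquivariant U χ EA := by
    intro g f
    apply Subtype.ext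
    show A (π (translate g f.1)) = translate g (A (π f.1))
    rw [hπT, hA.2]
  have hEBeq : IsEquivariant U χ EB := by
    intro g f
    apply Subtype.ext
    show B (π (translate g f.1)) = translate g (B (π f.1))
    rw [hπT, hB.2]
  -- Schur for π ∘ B
  obtain ⟨c, hc⟩ := schur σ hirr (π ∘ₗ B) (by
    intro g w
    show π (B (σ g w)) = σ g (π (B w))
    rw [hB.2, hπT])
  refine ⟨c, ?_⟩
  -- commutativity applied at A w
  apply LinearMap.ext
  intro w
  have hcm := hcomm EA EB hEAeq hEBeq ⟨A w, hA.1 w⟩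
  have h1 : EA ⟨A w, hA.1 w⟩ = ⟨A w, hA.1 w⟩ := by
    apply Subtype.ext
    show A (π (A w)) = A w
    rw [hπA]
  have h2 : EB ⟨A w, hA.1 w⟩ = ⟨B w, hB.1 w⟩ := by
    apply Subtype.ext
    show B (π (A w)) = B w
    rw [hπA]
  rw [h2, h1, h2] at hcm
  have h3 : A (π (B w)) = B w := congrArg Subtype.val hcm
  have h4 : π (B w) = c • w := hc w
  rw [h4, map_smul] at h3
  rw [← h3]
  rfl

/-- The Gelfand trick: a compatible anti-involution implies multiplicity-freeness. -/
theorem isMultFreeChar_of_tau (τ : G → G) (hanti : ∀ x y, τ (x * y) = τ y * τ x)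
    (hinv : ∀ x, τ (τ x) = x) (hfix : ∀ φ ∈ Hset U χ, ∀ g, φ (τ g) = φ g) :
    IsMultFreeChar U χ := by
  intro W _ _ _ σ hirr
  have hcomm := comm_of_tau U χ τ hanti hinv hfix
  rcases eq_or_ne (homGIndChar U χ σ) ⊥ with h | h
  · rw [h, finrank_bot]
    omega
  · obtain ⟨A, hA, hA0⟩ := Submodule.ne_bot_iff _ |>.mp h
    have hle : homGIndChar U χ σ ≤ ℂ ∙ A := by
      intro B hB
      obtain ⟨c, rfl⟩ := claim_smul U χ σ hirr hcomm A B hA hB hA0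
      exact Submodule.mem_span_singleton.mpr ⟨c, rfl⟩
    calc Module.finrank ℂ ↥(homGIndChar U χ σ) ≤ Module.finrank ℂ ↥(ℂ ∙ A) :=
          Submodule.finrank_mono hle
      _ = 1 := finrank_span_singleton hA0

end Hecke
section GL2

variable {F}

/-- Build an element of `GL(2,F)` from a matrix and an explicit inverse. -/
def mkGL (A B : Matrix (Fin 2) (Fin 2) F) (h1 : A * B = 1) (h2 : B * A = 1) :
    Matrix.GeneralLinearGroup (Fin 2) F := ⟨A, B, h1, h2⟩

@[simp] lemma mkGL_val (A B : Matrix (Fin 2) (Fin 2) F) (h1 h2) :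
    (mkGL A B h1 h2).val = A := rfl

/-- The unipotent element `(1 x; 0 1)`. -/
def uGL (x : F) : Matrix.GeneralLinearGroup (Fin 2) F :=
  mkGL !![1, x; 0, 1] !![1, -x; 0, 1]
    (by ext i j; fin_cases i <;> fin_cases j <;> simp [Matrix.mul_apply, Fin.sum_univ_two])
    (by ext i j; fin_cases i <;> fin_cases j <;> simp [Matrix.mul_apply, Fin.sum_univ_two])

/-- The Weyl element `(0 1; 1 0)`. -/
def wGL : Matrix.GeneralLinearGroup (Fin 2) F :=
  mkGL !![0, 1; 1, 0] !![0, 1; 1, 0]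
    (by ext i j; fin_cases i <;> fin_cases j <;> simp [Matrix.mul_apply, Fin.sum_univ_two])
    (by ext i j; fin_cases i <;> fin_cases j <;> simp [Matrix.mul_apply, Fin.sum_univ_two])

/-- Diagonal element `(a 0; 0 d)`. -/
def dGL (a d : F) (ha : a ≠ 0) (hd : d ≠ 0) : Matrix.GeneralLinearGroup (Fin 2) F :=
  mkGL !![a, 0; 0, d] !![a⁻¹, 0; 0, d⁻¹]
    (by ext i j; fin_cases i <;> fin_cases j <;>
        simp [Matrix.mul_apply, Fin.sum_univ_two, mul_inv_cancel₀, ha, hd])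
    (by ext i j; fin_cases i <;> fin_cases j <;>
        simp [Matrix.mul_apply, Fin.sum_univ_two, inv_mul_cancel₀, ha, hd])

lemma uGL_mul (x y : F) : uGL x * uGL y = uGL (x + y) := by
  apply Units.ext
  show (!![1, x; 0, 1] * !![1, y; 0, 1] : Matrix (Fin 2) (Fin 2) F) = !![1, x + y; 0, 1]
  ext i j
  fin_cases i <;> fin_cases j <;> simp [Matrix.mul_apply, Fin.sum_univ_two] <;> ring

/-- `uGL x` as an element of the unipotent subgroup. -/
def uU (x : F) : ↥(unipotent F) := ⟨uGL x, ⟨x, rfl⟩⟩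

lemma uU_mul (x y : F) : uU x * uU y = uU (x + y) := by
  apply Subtype.ext
  show uGL x * uGL y = uGL (x + y)
  exact uGL_mul x y

lemma mem_unipotent_iff (g : Matrix.GeneralLinearGroup (Fin 2) F) :
    g ∈ unipotent F ↔ ∃ b : F, g = uGL b := by
  constructor
  · rintro ⟨b, hb⟩
    exact ⟨b, Units.ext hb⟩
  · rintro ⟨b, rfl⟩
    exact ⟨b, rfl⟩

lemma unipotent_elt (k : ↥(unipotent F)) : ∃ b : F, k = uU b := by
  obtain ⟨b, hb⟩ := k.2
  exact ⟨b, Subtype.ext (Units.ext hb)⟩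

lemma det_ne_zero (g : Matrix.GeneralLinearGroup (Fin 2) F) :
    g.val 0 0 * g.val 1 1 - g.val 0 1 * g.val 1 0 ≠ 0 := by
  have hu : IsUnit ((g : Matrix (Fin 2) (Fin 2) F)).det :=
    (Matrix.isUnit_iff_isUnit_det _).mp g.isUnit
  rw [Matrix.det_fin_two] at hu
  exact isUnit_iff_ne_zero.mp hu

end GL2
section Tau

variable {F}

/-- The antidiagonal core element `(0 p; q 0)`. -/
def coreGL (p q : F) (hp : p ≠ 0) (hq : q ≠ 0) : Matrix.GeneralLinearGroup (Fin 2) F :=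
  mkGL !![0, p; q, 0] !![0, q⁻¹; p⁻¹, 0]
    (by ext i j; fin_cases i <;> fin_cases j <;>
        simp [Matrix.mul_apply, Fin.sum_univ_two, mul_inv_cancel₀, hp, hq])
    (by ext i j; fin_cases i <;> fin_cases j <;>
        simp [Matrix.mul_apply, Fin.sum_univ_two, inv_mul_cancel₀, hp, hq])

lemma wsq : (!![0, 1; 1, 0] : Matrix (Fin 2) (Fin 2) F) * !![0, 1; 1, 0] = 1 := by
  ext i j
  fin_cases i <;> fin_cases j <;> simp [Matrix.mul_apply, Fin.sum_univ_two, Matrix.one_apply]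

lemma tau_aux {A B : Matrix (Fin 2) (Fin 2) F} (h : B * A = 1) :
    (!![0, 1; 1, 0] * A.transpose * !![0, 1; 1, 0]) * (!![0, 1; 1, 0] * B.transpose * !![0, 1; 1, 0]) = 1 := by
  have hAB : A.transpose * B.transpose = 1 := by
    rw [← Matrix.transpose_mul, h, Matrix.transpose_one]
  simp only [mul_assoc]
  rw [show (!![0, 1; 1, 0] : Matrix (Fin 2) (Fin 2) F) *
      (!![0, 1; 1, 0] * (B.transpose * !![0, 1; 1, 0])) = B.transpose * !![0, 1; 1, 0] from by
    rw [← mul_assoc, wsq, one_mul]]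
  rw [← mul_assoc A.transpose B.transpose, hAB, one_mul, wsq]

/-- The anti-involution `g ↦ w gᵀ w` of `GL(2,F)`; it fixes `U` pointwise. -/
def tauGL (g : Matrix.GeneralLinearGroup (Fin 2) F) : Matrix.GeneralLinearGroup (Fin 2) F :=
  mkGL (!![0, 1; 1, 0] * g.val.transpose * !![0, 1; 1, 0]) (!![0, 1; 1, 0] * (g.inv).transpose * !![0, 1; 1, 0])
    (tau_aux g.inv_val) (tau_aux g.val_inv)

lemma tau_val (g : Matrix.GeneralLinearGroup (Fin 2) F) :
    (tauGL g).val = !![g.val 1 1, g.val 0 1; g.val 1 0, g.val 0 0] := by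
  show !![0, 1; 1, 0] * g.val.transpose * !![0, 1; 1, 0] = _
  ext i j
  fin_cases i <;> fin_cases j <;>
    simp [Matrix.mul_apply, Fin.sum_univ_two, Matrix.transpose_apply, Matrix.vecMul,
      dotProduct, Matrix.vecHead, Matrix.vecTail]

lemma tau_anti (x y : Matrix.GeneralLinearGroup (Fin 2) F) :
    tauGL (x * y) = tauGL y * tauGL x := by
  apply Units.ext
  rw [Units.val_mul, tau_val, tau_val, tau_val, Units.val_mul]
  ext i j
  fin_cases i <;> fin_cases j <;>
    simp [Matrix.mul_apply, Fin.sum_univ_two] <;> ring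

lemma tau_invol (g : Matrix.GeneralLinearGroup (Fin 2) F) : tauGL (tauGL g) = g := by
  apply Units.ext
  rw [tau_val, tau_val]
  conv_rhs => rw [Matrix.eta_fin_two g.val]
  ext i j
  fin_cases i <;> fin_cases j <;> simp

end Tau

section Hfix

variable {F}

lemma phi_right_u {χ : ↥(unipotent F) →* ℂ} {φ : Matrix.GeneralLinearGroup (Fin 2) F → ℂ}
    (hφ : φ ∈ Hset (unipotent F) χ) (g : Matrix.GeneralLinearGroup (Fin 2) F) (s : F) :
    φ (g * uGL s) = (χ (uU s))⁻¹ * φ g := hφ.1 g (uU s)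

lemma phi_left_u {χ : ↥(unipotent F) →* ℂ} {φ : Matrix.GeneralLinearGroup (Fin 2) F → ℂ}
    (hφ : φ ∈ Hset (unipotent F) χ) (g : Matrix.GeneralLinearGroup (Fin 2) F) (s : F) :
    φ (uGL s * g) = (χ (uU s))⁻¹ * φ g := hφ.2 g (uU s)

lemma exists_chi_ne_one {χ : ↥(unipotent F) →* ℂ} (hχ : χ ≠ 1) : ∃ r : F, χ (uU r) ≠ 1 := by
  by_contra h
  push_neg at h
  apply hχ
  ext k
  obtain ⟨b, rfl⟩ := unipotent_elt k
  rw [h b]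
  rfl

lemma vanish_diag {χ : ↥(unipotent F) →* ℂ} (hχ : χ ≠ 1)
    {φ : Matrix.GeneralLinearGroup (Fin 2) F → ℂ} (hφ : φ ∈ Hset (unipotent F) χ)
    (a d : F) (ha : a ≠ 0) (hd : d ≠ 0) (had : a ≠ d) : φ (dGL a d ha hd) = 0 := by
  obtain ⟨r, hr⟩ := exists_chi_ne_one hχ
  have had' : a - d ≠ 0 := sub_ne_zero.mpr had
  set s : F := r * d / (a - d) with hs
  have key1 : dGL a d ha hd * uGL s = uGL (a * s / d) * dGL a d ha hd := by
    apply Units.ext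
    rw [Units.val_mul, Units.val_mul]
    show (!![a, 0; 0, d] * !![1, s; 0, 1] : Matrix (Fin 2) (Fin 2) F)
      = !![1, a * s / d; 0, 1] * !![a, 0; 0, d]
    ext i j
    fin_cases i <;> fin_cases j <;>
      simp [Matrix.mul_apply, Fin.sum_univ_two] <;> field_simp
  by_contra h0
  have h1 : (χ (uU s))⁻¹ * φ (dGL a d ha hd) = (χ (uU (a * s / d)))⁻¹ * φ (dGL a d ha hd) := by
    rw [← phi_right_u hφ _ s, ← phi_left_u hφ _ (a * s / d), key1]
  have h2 : (χ (uU s))⁻¹ = (χ (uU (a * s / d)))⁻¹ := mul_right_cancel₀ h0 h1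
  have h3 : χ (uU s) = χ (uU (a * s / d)) := inv_injective h2
  have h4 : a * s / d = s + r := by
    rw [hs]
    field_simp
    ring
  rw [h4, ← uU_mul, map_mul] at h3
  have h5 : χ (uU r) = 1 := by
    have hne := chi_ne_zero (unipotent F) χ (uU s)
    field_simp at h3
    exact h3.symm
  exact hr h5

theorem hfix_gl2 {χ : ↥(unipotent F) →* ℂ} (hχ : χ ≠ 1)
    (φ : Matrix.GeneralLinearGroup (Fin 2) F → ℂ) (hφ : φ ∈ Hset (unipotent F) χ)
    (g : Matrix.GeneralLinearGroup (Fin 2) F) : φ (tauGL g) = φ g := by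
  obtain ⟨a, b, c, d, hg⟩ : ∃ a b c d : F, g.val = !![a, b; c, d] :=
    ⟨_, _, _, _, Matrix.eta_fin_two g.val⟩
  have hdet : a * d - b * c ≠ 0 := by
    have := det_ne_zero g
    rw [hg] at this
    simpa using this
  have htv : (tauGL g).val = !![d, b; c, a] := by
    rw [tau_val, hg]
    norm_num
  by_cases hc : c = 0
  · have hd : d ≠ 0 := by
      intro h
      exact hdet (by rw [h, hc]; ring)
    have ha : a ≠ 0 := by
      intro h
      exact hdet (by rw [h, hc]; ring)
    by_cases had : a = d
    · have : tauGL g = g := by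
        apply Units.ext
        rw [htv, hg, had, hc]
      rw [this]
    · have hdec : g = uGL (b / d) * dGL a d ha hd := by
        apply Units.ext
        rw [Units.val_mul, hg]
        show (!![a, b; c, d] : Matrix (Fin 2) (Fin 2) F) = !![1, b / d; 0, 1] * !![a, 0; 0, d]
        ext i j
        fin_cases i <;> fin_cases j <;>
          simp [Matrix.mul_apply, Fin.sum_univ_two, hc] <;> field_simp
      have hdec2 : tauGL g = uGL (b / a) * dGL d a hd ha := by
        apply Units.ext
        rw [Units.val_mul, htv]
        show (!![d, b; c, a] : Matrix (Fin 2) (Fin 2) F) = !![1, b / a; 0, 1] * !![d, 0; 0, a]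
        ext i j
        fin_cases i <;> fin_cases j <;>
          simp [Matrix.mul_apply, Fin.sum_univ_two, hc] <;> field_simp
      calc φ (tauGL g) = (χ (uU (b / a)))⁻¹ * φ (dGL d a hd ha) := by
              rw [hdec2, phi_left_u hφ]
        _ = 0 := by rw [vanish_diag hχ hφ d a hd ha (Ne.symm had), mul_zero]
        _ = (χ (uU (b / d)))⁻¹ * φ (dGL a d ha hd) := by
              rw [vanish_diag hχ hφ a d ha hd had, mul_zero]
        _ = φ g := by rw [hdec, phi_left_u hφ]
  · have hpp : (b * c - a * d) / c ≠ 0 := by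
      apply div_ne_zero _ hc
      intro h
      apply hdet
      rw [sub_eq_zero] at h ⊢
      exact h.symm
    have hdec : g = uGL (a / c) * coreGL ((b * c - a * d) / c) c hpp hc * uGL (d / c) := by
      apply Units.ext
      rw [Units.val_mul, Units.val_mul, hg]
      show (!![a, b; c, d] : Matrix (Fin 2) (Fin 2) F)
        = !![1, a / c; 0, 1] * !![0, (b * c - a * d) / c; c, 0] * !![1, d / c; 0, 1]
      ext i j
      fin_cases i <;> fin_cases j <;>
        simp [Matrix.mul_apply, Fin.sum_univ_two] <;> field_simp <;> ring_nf
    have hdec2 : tauGL g = uGL (d / c) * coreGL ((b * c - a * d) / c) c hpp hc * uGL (a / c) := by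
      apply Units.ext
      rw [Units.val_mul, Units.val_mul, htv]
      show (!![d, b; c, a] : Matrix (Fin 2) (Fin 2) F)
        = !![1, d / c; 0, 1] * !![0, (b * c - a * d) / c; c, 0] * !![1, a / c; 0, 1]
      ext i j
      fin_cases i <;> fin_cases j <;>
        simp [Matrix.mul_apply, Fin.sum_univ_two] <;> field_simp <;> ring_nf
    have h1 : φ (tauGL g) = (χ (uU (a / c)))⁻¹ *
        ((χ (uU (d / c)))⁻¹ * φ (coreGL ((b * c - a * d) / c) c hpp hc)) := by
      rw [hdec2, phi_right_u hφ, phi_left_u hφ]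
    have h2 : φ g = (χ (uU (d / c)))⁻¹ *
        ((χ (uU (a / c)))⁻¹ * φ (coreGL ((b * c - a * d) / c) c hpp hc)) := by
      rw [hdec, phi_right_u hφ, phi_left_u hφ]
    rw [h1, h2]
    ring

end Hfix
theorem part1_test (χ : ↥(unipotent F) →* ℂ) (hχ : χ ≠ 1) : IsMultFreeChar (unipotent F) χ :=
  isMultFreeChar_of_tau (unipotent F) χ tauGL tau_anti tau_invol
    (fun φ hφ g => hfix_gl2 hχ φ hφ g)
section PS

/-- The quadratic character of `F`, valued in `ℂ`. -/
def betaC : F → ℂ := fun x => ((quadraticChar F x : ℤ) : ℂ)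

variable {F}

lemma betaC_mul (x y : F) : betaC F (x * y) = betaC F x * betaC F y := by
  unfold betaC
  rw [map_mul]
  push_cast
  ring

lemma betaC_one : betaC F 1 = 1 := by unfold betaC; rw [map_one]; norm_num

lemma betaC_ne_zero {x : F} (hx : x ≠ 0) : betaC F x ≠ 0 := by
  unfold betaC
  intro h
  have h2 : quadraticChar F x = 0 := by exact_mod_cast h
  exact hx (quadraticChar_eq_zero_iff.mp h2)

lemma betaC_sq {x : F} (hx : x ≠ 0) : betaC F x * betaC F x = 1 := by
  unfold betaC
  have h : quadraticChar F x ^ 2 = 1 := quadraticChar_sq_one hx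
  have h2 : (quadraticChar F x : ℤ) * (quadraticChar F x : ℤ) = 1 := by
    rw [← sq]; exact_mod_cast h
  exact_mod_cast congrArg (fun t : ℤ => (t : ℂ)) h2

lemma betaC_inv {x : F} (hx : x ≠ 0) : (betaC F x)⁻¹ = betaC F x :=
  inv_eq_of_mul_eq_one_right (betaC_sq hx)

lemma betaC_nonsquare (hodd : Odd (Fintype.card F)) : ∃ u : F, u ≠ 0 ∧ betaC F u = -1 := by
  have hchar : ringChar F ≠ 2 := by
    intro h
    have h2 := FiniteField.even_card_iff_char_two.mp h
    obtain ⟨m, hm⟩ := hodd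
    omega
  obtain ⟨u, hu⟩ := quadraticChar_exists_neg_one hchar
  refine ⟨u, ?_, ?_⟩
  · intro h0
    rw [h0, quadraticChar_zero] at hu
    exact absurd hu (by norm_num)
  · unfold betaC
    rw [hu]
    norm_num

end PS
/-- The Borel subgroup of upper triangular matrices in `GL(2,F)`. -/
def borelSub : Subgroup (Matrix.GeneralLinearGroup (Fin 2) F) where
  carrier := {g | g.val 1 0 = 0}
  one_mem' := by
    show (1 : Matrix.GeneralLinearGroup (Fin 2) F).val 1 0 = 0
    rw [Units.val_one]
    simp [Matrix.one_apply]
  mul_mem' := by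
    intro x y hx hy
    show (x * y).val 1 0 = 0
    rw [Units.val_mul, Matrix.mul_apply, Fin.sum_univ_two]
    rw [show x.val 1 0 = 0 from hx, show y.val 1 0 = 0 from hy]
    ring
  inv_mem' := by
    intro x hx
    show (x⁻¹).val 1 0 = 0
    have hx' : x.val 1 0 = 0 := hx
    have hx00 : x.val 0 0 ≠ 0 := by
      intro h
      have := det_ne_zero x
      rw [h, hx'] at this
      simp at this
    have hinv : (x⁻¹).val * x.val = 1 := by
      rw [← Units.val_mul, inv_mul_cancel, Units.val_one]
    have h10 := congrFun (congrFun hinv 1) 0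
    rw [Matrix.mul_apply, Fin.sum_univ_two, hx'] at h10
    simp [Matrix.one_apply] at h10
    rcases h10 with h | h
    · exact (by exact_mod_cast h)
    · exact absurd h hx00

variable {F}

lemma mem_borelSub {g : Matrix.GeneralLinearGroup (Fin 2) F} (h : g.val 1 0 = 0) :
    g ∈ borelSub F := h

lemma borel_10 (k : ↥(borelSub F)) : k.1.val 1 0 = 0 := k.2

lemma borel_00_ne_zero (k : ↥(borelSub F)) : k.1.val 0 0 ≠ 0 := by
  intro h
  have := det_ne_zero k.1
  rw [h, borel_10 k] at this
  simp at this

variable (F)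

/-- The character `(a b; 0 d) ↦ quadraticChar(a)` of the Borel subgroup. -/
def alphaQ : ↥(borelSub F) →* ℂ where
  toFun k := betaC F (k.1.val 0 0)
  map_one' := by
    show betaC F ((1 : Matrix.GeneralLinearGroup (Fin 2) F).val 0 0) = 1
    rw [Units.val_one]
    simp [Matrix.one_apply, betaC_one]
  map_mul' := by
    intro x y
    show betaC F ((x.1 * y.1).val 0 0) = _
    rw [Units.val_mul, Matrix.mul_apply, Fin.sum_univ_two,
      borel_10 y, mul_zero, add_zero, betaC_mul]

/-- The spherical-type vector supported on the Borel subgroup. -/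
def einf : Matrix.GeneralLinearGroup (Fin 2) F → ℂ := fun g =>
  if g.val 1 0 = 0 then betaC F (g.val 0 0) else 0

/-- The `U`-invariant vector supported on the big cell. -/
def fbig : Matrix.GeneralLinearGroup (Fin 2) F → ℂ := fun g =>
  if g.val 1 0 = 0 then 0 else betaC F (g.val 1 0)

variable {F}

lemma prod_entries (g : Matrix.GeneralLinearGroup (Fin 2) F) (k : ↥(borelSub F)) :
    (g * k.1).val 1 0 = g.val 1 0 * k.1.val 0 0 ∧
    (g * k.1).val 0 0 = g.val 0 0 * k.1.val 0 0 := by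
  constructor <;>
  · rw [Units.val_mul, Matrix.mul_apply, Fin.sum_univ_two, borel_10 k]
    ring

lemma einf_mem : einf F ∈ indChar (borelSub F) (alphaQ F) := by
  intro g k
  obtain ⟨h10, h00⟩ := prod_entries g k
  show einf F (g * k.1) = (betaC F (k.1.val 0 0))⁻¹ * einf F g
  rw [betaC_inv (borel_00_ne_zero k)]
  unfold einf
  rw [h10, h00]
  by_cases hg : g.val 1 0 = 0
  · rw [if_pos (by rw [hg]; ring), if_pos hg, betaC_mul]
    ring
  · rw [if_neg (fun h => hg (by
      rcases mul_eq_zero.mp h with h' | h'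
      · exact h'
      · exact absurd h' (borel_00_ne_zero k))), if_neg hg, mul_zero]

lemma fbig_mem : fbig F ∈ indChar (borelSub F) (alphaQ F) := by
  intro g k
  obtain ⟨h10, _⟩ := prod_entries g k
  show fbig F (g * k.1) = (betaC F (k.1.val 0 0))⁻¹ * fbig F g
  rw [betaC_inv (borel_00_ne_zero k)]
  unfold fbig
  rw [h10]
  by_cases hg : g.val 1 0 = 0
  · rw [if_pos (by rw [hg]; ring), if_pos hg, mul_zero]
  · rw [if_neg (fun h => hg (by
      rcases mul_eq_zero.mp h with h' | h'
      · exact h'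
      · exact absurd h' (borel_00_ne_zero k))), if_neg hg, betaC_mul]
    ring

/-- An upper triangular element of the Borel subgroup. -/
def borelMkGL (p r s : F) (hp : p ≠ 0) (hs : s ≠ 0) : Matrix.GeneralLinearGroup (Fin 2) F :=
  mkGL !![p, r; 0, s] !![p⁻¹, -(r / (p * s)); 0, s⁻¹]
    (by ext i j; fin_cases i <;> fin_cases j <;>
        simp [Matrix.mul_apply, Fin.sum_univ_two, hp, hs] <;> field_simp <;> ring_nf)
    (by ext i j; fin_cases i <;> fin_cases j <;>
        simp [Matrix.mul_apply, Fin.sum_univ_two, hp, hs] <;> field_simp <;> ring_nf)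

def borelMk (p r s : F) (hp : p ≠ 0) (hs : s ≠ 0) : ↥(borelSub F) :=
  ⟨borelMkGL p r s hp hs, mem_borelSub (by
    show (borelMkGL p r s hp hs).val 1 0 = 0
    simp [borelMkGL])⟩

lemma alphaQ_borelMk (p r s : F) (hp : p ≠ 0) (hs : s ≠ 0) :
    alphaQ F (borelMk p r s hp hs) = betaC F p := rfl

lemma uGL_mem_borel (t : F) : uGL t ∈ borelSub F :=
  mem_borelSub (by simp [uGL])

lemma alphaQ_uGL (t : F) : alphaQ F (⟨uGL t, uGL_mem_borel t⟩ : ↥(borelSub F)) = 1 := by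
  show betaC F ((uGL t).val 0 0) = 1
  have : (uGL t).val 0 0 = 1 := by simp [uGL]
  rw [this, betaC_one]

/-- Representation of values on the Borel cell. -/
lemma RL_borel {f : Matrix.GeneralLinearGroup (Fin 2) F → ℂ}
    (hf : f ∈ indChar (borelSub F) (alphaQ F)) (g : Matrix.GeneralLinearGroup (Fin 2) F)
    (hg : g.val 1 0 = 0) : f g = betaC F (g.val 0 0) * f 1 := by
  have h := hf 1 ⟨g, mem_borelSub hg⟩
  rw [one_mul] at h
  rw [h]
  show (betaC F (g.val 0 0))⁻¹ * f 1 = _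
  rw [betaC_inv (borel_00_ne_zero ⟨g, mem_borelSub hg⟩)]

/-- Representation of values on the big cell. -/
lemma RL_big {f : Matrix.GeneralLinearGroup (Fin 2) F → ℂ}
    (hf : f ∈ indChar (borelSub F) (alphaQ F)) (g : Matrix.GeneralLinearGroup (Fin 2) F)
    (hg : g.val 1 0 ≠ 0) :
    f g = betaC F (g.val 1 0) * f (uGL (g.val 0 0 / g.val 1 0) * wGL) := by
  obtain ⟨a, b, c, d, hgm⟩ : ∃ a b c d : F, g.val = !![a, b; c, d] :=
    ⟨_, _, _, _, Matrix.eta_fin_two g.val⟩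
  have hc : c ≠ 0 := by rw [hgm] at hg; simpa using hg
  have hdet : a * d - b * c ≠ 0 := by
    have := det_ne_zero g
    rw [hgm] at this
    simpa using this
  have hs : (b * c - a * d) / c ≠ 0 := by
    apply div_ne_zero _ hc
    intro h
    apply hdet
    rw [sub_eq_zero] at h ⊢
    exact h.symm
  have hdec : g = (uGL (a / c) * wGL) * (borelMk c d ((b * c - a * d) / c) hc hs).1 := by
    apply Units.ext
    rw [Units.val_mul, Units.val_mul, hgm]
    show (!![a, b; c, d] : Matrix (Fin 2) (Fin 2) F)
      = !![1, a / c; 0, 1] * !![0, 1; 1, 0] * !![c, d; 0, (b * c - a * d) / c]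
    ext i j
    fin_cases i <;> fin_cases j <;>
      simp [Matrix.mul_apply, Fin.sum_univ_two] <;> field_simp <;> ring
  have hfv := hf (uGL (a / c) * wGL) (borelMk c d ((b * c - a * d) / c) hc hs)
  rw [← hdec, alphaQ_borelMk, betaC_inv hc] at hfv
  have h00 : g.val 0 0 = a := by rw [hgm]; simp
  have h10 : g.val 1 0 = c := by rw [hgm]; simp
  rw [h00, h10, hfv]
lemma uGL_zero : uGL (0 : F) = 1 := by
  apply Units.ext
  show (!![1, 0; 0, 1] : Matrix (Fin 2) (Fin 2) F) = 1
  ext i j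
  fin_cases i <;> fin_cases j <;> simp [Matrix.one_apply]

lemma uGL_inv (t : F) : (uGL t)⁻¹ = uGL (-t) := by
  apply Units.ext
  rfl

lemma wGL_inv : (wGL : Matrix.GeneralLinearGroup (Fin 2) F)⁻¹ = wGL := by
  apply Units.ext
  rfl

lemma uw_val (x : F) : (uGL x * wGL).val = !![x, 1; 1, 0] := by
  rw [Units.val_mul]
  show (!![1, x; 0, 1] : Matrix (Fin 2) (Fin 2) F) * !![0, 1; 1, 0] = _
  ext i j
  fin_cases i <;> fin_cases j <;> simp [Matrix.mul_apply, Fin.sum_univ_two]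

lemma einf_one : einf F 1 = 1 := by
  unfold einf
  rw [Units.val_one]
  simp [Matrix.one_apply, betaC_one]

/-- Delta-type functions on the affine cells. -/
def eAff (x : F) : Matrix.GeneralLinearGroup (Fin 2) F → ℂ := fun g =>
  if g.val 1 0 ≠ 0 ∧ g.val 0 0 = x * g.val 1 0 then betaC F (g.val 1 0) else 0

lemma translate_uw_einf (x : F) :
    translate (uGL x * wGL) (einf F) = eAff x := by
  funext g
  show einf F ((uGL x * wGL)⁻¹ * g) = eAff x g
  have hm : ((uGL x * wGL)⁻¹ * g).val = !![0, 1; 1, -x] * g.val := by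
    rw [mul_inv_rev, wGL_inv, uGL_inv, Units.val_mul, Units.val_mul]
    congr 1
    show (!![0, 1; 1, 0] : Matrix (Fin 2) (Fin 2) F) * !![1, -x; 0, 1] = _
    ext i j
    fin_cases i <;> fin_cases j <;> simp [Matrix.mul_apply, Fin.sum_univ_two]
  have h10 : ((uGL x * wGL)⁻¹ * g).val 1 0 = g.val 0 0 - x * g.val 1 0 := by
    rw [hm, Matrix.mul_apply, Fin.sum_univ_two]
    simp
    ring
  have h00 : ((uGL x * wGL)⁻¹ * g).val 0 0 = g.val 1 0 := by
    rw [hm, Matrix.mul_apply, Fin.sum_univ_two]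
    simp
  unfold einf eAff
  rw [h10, h00]
  by_cases hc : g.val 0 0 - x * g.val 1 0 = 0
  · have hcc : g.val 0 0 = x * g.val 1 0 := by linear_combination hc
    have hg10 : g.val 1 0 ≠ 0 := by
      intro h
      have hdet := det_ne_zero g
      rw [h, hcc, h] at hdet
      simp at hdet
    rw [if_pos hc, if_pos ⟨hg10, hcc⟩]
  · rw [if_neg hc, if_neg (fun h => hc (by rw [h.2]; ring))]

/-- Every vector of the principal series is determined by its values at `1` and the `uGL x * w`. -/
lemma full_decomp {f : Matrix.GeneralLinearGroup (Fin 2) F → ℂ}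
    (hf : f ∈ indChar (borelSub F) (alphaQ F)) (g : Matrix.GeneralLinearGroup (Fin 2) F) :
    f g = f 1 * einf F g + ∑ x : F, f (uGL x * wGL) * eAff x g := by
  by_cases hg : g.val 1 0 = 0
  · have hz : ∀ x : F, f (uGL x * wGL) * eAff x g = 0 := by
      intro x
      unfold eAff
      rw [if_neg (fun h => h.1 hg), mul_zero]
    rw [Finset.sum_congr rfl (fun x _ => hz x), Finset.sum_const_zero, add_zero]
    unfold einf
    rw [if_pos hg, RL_borel hf g hg]
    ring
  · have hz : einf F g = 0 := by unfold einf; rw [if_neg hg]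
    have hterm : ∀ x : F, f (uGL x * wGL) * eAff x g =
        if x = g.val 0 0 / g.val 1 0
        then f (uGL (g.val 0 0 / g.val 1 0) * wGL) * betaC F (g.val 1 0) else 0 := by
      intro x
      unfold eAff
      by_cases hx : x = g.val 0 0 / g.val 1 0
      · subst hx
        rw [if_pos ⟨hg, (div_mul_cancel₀ _ hg).symm⟩, if_pos rfl]
      · rw [if_neg (fun h => hx (by field_simp; linear_combination -h.2)), mul_zero,
          if_neg hx]
    rw [Finset.sum_congr rfl (fun x _ => hterm x), Finset.sum_ite_eq' Finset.univ,
      if_pos (Finset.mem_univ _), hz, mul_zero, zero_add, RL_big hf g hg]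
    ring

/-- Decomposition of a principal series vector in the delta basis. -/
lemma repDecomp (f : ↥(indChar (borelSub F) (alphaQ F))) :
    f = (f : Matrix.GeneralLinearGroup (Fin 2) F → ℂ) 1 • (⟨einf F, einf_mem⟩ :
          ↥(indChar (borelSub F) (alphaQ F)))
        + ∑ x : F, (f : Matrix.GeneralLinearGroup (Fin 2) F → ℂ) (uGL x * wGL)
          • indRep (borelSub F) (alphaQ F) (uGL x * wGL) ⟨einf F, einf_mem⟩ := by
  set einfE : ↥(indChar (borelSub F) (alphaQ F)) := ⟨einf F, einf_mem⟩ with heinfE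
  apply Subtype.ext
  funext g
  show (f : Matrix.GeneralLinearGroup (Fin 2) F → ℂ) g = _
  rw [full_decomp f.2 g, Submodule.coe_add, Pi.add_apply, Submodule.coe_smul,
    Pi.smul_apply, smul_eq_mul]
  congr 1
  have hc := map_sum ((indChar (borelSub F) (alphaQ F)).subtype)
    (fun x : F => (f : Matrix.GeneralLinearGroup (Fin 2) F → ℂ) (uGL x * wGL)
      • indRep (borelSub F) (alphaQ F) (uGL x * wGL) einfE) Finset.univ
  have h1 := congrFun hc g
  rw [Finset.sum_apply] at h1
  refine Eq.trans ?_ h1.symm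
  apply Finset.sum_congr rfl
  intro x _
  show (f : Matrix.GeneralLinearGroup (Fin 2) F → ℂ) (uGL x * wGL) * eAff x g
    = ((f : Matrix.GeneralLinearGroup (Fin 2) F → ℂ) (uGL x * wGL)
        • ((indRep (borelSub F) (alphaQ F) (uGL x * wGL) einfE :
          ↥(indChar (borelSub F) (alphaQ F))) : Matrix.GeneralLinearGroup (Fin 2) F → ℂ)) g
  rw [Pi.smul_apply, smul_eq_mul]
  congr 1
  show eAff x g = translate (uGL x * wGL) (einf F) g
  rw [translate_uw_einf]

/-- Irreducibility of the principal series `Ind_B^G (quadraticChar ⊗ 1)`. -/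
theorem psIrr (hodd : Odd (Fintype.card F)) :
    IsIrreducibleRep (indRep (borelSub F) (alphaQ F)) := by
  have hFcard : (Fintype.card F : ℂ) ≠ 0 := Nat.cast_ne_zero.mpr Fintype.card_ne_zero
  set einfE : ↥(indChar (borelSub F) (alphaQ F)) := ⟨einf F, einf_mem⟩ with heinfE
  constructor
  · intro h
    have hmem : einfE ∈ (⊥ : Submodule ℂ ↥(indChar (borelSub F) (alphaQ F))) := by
      rw [h]; trivial
    rw [Submodule.mem_bot] at hmem
    have h1 := congrFun (congrArg Subtype.val hmem) 1
    rw [heinfE] at h1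
    simp only at h1
    rw [einf_one] at h1
    exact one_ne_zero (h1 : (1 : ℂ) = 0)
  · intro p hpinv
    by_cases hbot : p = ⊥
    · left; exact hbot
    right
    obtain ⟨f0, hf0p, hf0ne⟩ := (Submodule.ne_bot_iff p).mp hbot
    -- Step A: find a vector in p not vanishing at 1
    have hA : ∃ f1, f1 ∈ p ∧ (f1 : Matrix.GeneralLinearGroup (Fin 2) F → ℂ) 1 ≠ 0 := by
      by_cases h1 : (f0 : Matrix.GeneralLinearGroup (Fin 2) F → ℂ) 1 = 0
      · have hx0 : ∃ x0 : F,
            (f0 : Matrix.GeneralLinearGroup (Fin 2) F → ℂ) (uGL x0 * wGL) ≠ 0 := by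
          by_contra hall
          push_neg at hall
          apply hf0ne
          apply Subtype.ext
          show (f0 : Matrix.GeneralLinearGroup (Fin 2) F → ℂ) = ↑(0 : ↥(indChar (borelSub F) (alphaQ F)))
          rw [ZeroMemClass.coe_zero]
          funext g
          show (f0 : Matrix.GeneralLinearGroup (Fin 2) F → ℂ) g = 0
          rw [full_decomp f0.2 g, h1, zero_mul, zero_add]
          apply Finset.sum_eq_zero
          intro x _
          rw [hall x, zero_mul]
        obtain ⟨x0, hx0⟩ := hx0
        refine ⟨indRep (borelSub F) (alphaQ F) ((uGL x0 * wGL)⁻¹) f0, hpinv _ _ hf0p, ?_⟩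
        show translate ((uGL x0 * wGL)⁻¹) (f0 : Matrix.GeneralLinearGroup (Fin 2) F → ℂ) 1 ≠ 0
        show (f0 : Matrix.GeneralLinearGroup (Fin 2) F → ℂ) (((uGL x0 * wGL)⁻¹)⁻¹ * 1) ≠ 0
        rw [inv_inv, mul_one]
        exact hx0
      · exact ⟨f0, hf0p, h1⟩
    obtain ⟨f1, hf1p, hf1ne⟩ := hA
    -- Step B: average over U
    set h0 : ↥(indChar (borelSub F) (alphaQ F)) :=
      ∑ t : F, indRep (borelSub F) (alphaQ F) (uGL t) f1 with hh0
    have hh0p : h0 ∈ p := Submodule.sum_mem p (fun t _ => hpinv _ _ hf1p)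
    have hh0val : ∀ g, (h0 : Matrix.GeneralLinearGroup (Fin 2) F → ℂ) g
        = ∑ t : F, (f1 : Matrix.GeneralLinearGroup (Fin 2) F → ℂ) ((uGL t)⁻¹ * g) := by
      intro g
      have hc := map_sum ((indChar (borelSub F) (alphaQ F)).subtype)
        (fun t : F => indRep (borelSub F) (alphaQ F) (uGL t) f1) Finset.univ
      simp only [Submodule.coe_subtype] at hc
      have hc2 := congrFun hc g
      rw [Finset.sum_apply] at hc2
      exact hc2
    have hB1 : (h0 : Matrix.GeneralLinearGroup (Fin 2) F → ℂ) 1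
        = (Fintype.card F : ℂ) * (f1 : Matrix.GeneralLinearGroup (Fin 2) F → ℂ) 1 := by
      rw [hh0val 1]
      have hterm : ∀ t : F, (f1 : Matrix.GeneralLinearGroup (Fin 2) F → ℂ) ((uGL t)⁻¹ * 1)
          = (f1 : Matrix.GeneralLinearGroup (Fin 2) F → ℂ) 1 := by
        intro t
        rw [mul_one, uGL_inv]
        rw [RL_borel f1.2 (uGL (-t)) (by simp [uGL])]
        have he : (uGL (-t)).val 0 0 = 1 := by simp [uGL]
        rw [he, betaC_one, one_mul]
      rw [Finset.sum_congr rfl (fun t _ => hterm t), Finset.sum_const, Finset.card_univ,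
        nsmul_eq_mul]
    have hB2 : ∀ x : F, (h0 : Matrix.GeneralLinearGroup (Fin 2) F → ℂ) (uGL x * wGL)
        = (h0 : Matrix.GeneralLinearGroup (Fin 2) F → ℂ) wGL := by
      intro x
      rw [hh0val, hh0val]
      refine (Fintype.sum_equiv (Equiv.addLeft x)
        (fun t => (f1 : Matrix.GeneralLinearGroup (Fin 2) F → ℂ) ((uGL t)⁻¹ * wGL))
        (fun t => (f1 : Matrix.GeneralLinearGroup (Fin 2) F → ℂ) ((uGL t)⁻¹ * (uGL x * wGL)))
        ?_).symm
      intro t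
      show (f1 : Matrix.GeneralLinearGroup (Fin 2) F → ℂ) ((uGL t)⁻¹ * wGL)
        = (f1 : Matrix.GeneralLinearGroup (Fin 2) F → ℂ) ((uGL (x + t))⁻¹ * (uGL x * wGL))
      rw [uGL_inv, uGL_inv, ← mul_assoc, uGL_mul]
      have he : -(x + t) + x = -t := by ring
      rw [he]
    -- Step C: subtract the twist by a nonsquare torus element
    obtain ⟨u, hu0, hβu⟩ := betaC_nonsquare hodd
    set dg : Matrix.GeneralLinearGroup (Fin 2) F := dGL u 1 hu0 one_ne_zero with hdg
    set h1v : ↥(indChar (borelSub F) (alphaQ F)) := indRep (borelSub F) (alphaQ F) dg h0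
      with hh1v
    have hh1p : h1v ∈ p := hpinv _ _ hh0p
    have hdginv : (dg⁻¹).val = !![u⁻¹, 0; 0, 1⁻¹] := rfl
    have hbetauinv : betaC F u⁻¹ = betaC F u := by
      have h := betaC_mul u⁻¹ u
      rw [inv_mul_cancel₀ hu0, betaC_one] at h
      have h2 : betaC F u⁻¹ = (betaC F u)⁻¹ :=
        eq_inv_of_mul_eq_one_left h.symm
      rw [h2, betaC_inv hu0]
    have hC1 : (h1v : Matrix.GeneralLinearGroup (Fin 2) F → ℂ) 1
        = betaC F u * (h0 : Matrix.GeneralLinearGroup (Fin 2) F → ℂ) 1 := by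
      show (h0 : Matrix.GeneralLinearGroup (Fin 2) F → ℂ) (dg⁻¹ * 1)
        = betaC F u * (h0 : Matrix.GeneralLinearGroup (Fin 2) F → ℂ) 1
      rw [mul_one, RL_borel h0.2 dg⁻¹ (by rw [hdginv]; norm_num)]
      have he : (dg⁻¹).val 0 0 = u⁻¹ := by rw [hdginv]; norm_num
      rw [he, hbetauinv]
    have hC2 : ∀ x : F, (h1v : Matrix.GeneralLinearGroup (Fin 2) F → ℂ) (uGL x * wGL)
        = (h0 : Matrix.GeneralLinearGroup (Fin 2) F → ℂ) wGL := by
      intro x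
      show (h0 : Matrix.GeneralLinearGroup (Fin 2) F → ℂ) (dg⁻¹ * (uGL x * wGL)) = _
      have hmval : (dg⁻¹ * (uGL x * wGL)).val = !![u⁻¹ * x, u⁻¹; 1, 0] := by
        rw [Units.val_mul, hdginv, uw_val]
        ext i j
        fin_cases i <;> fin_cases j <;> simp [Matrix.mul_apply, Fin.sum_univ_two]
      rw [RL_big h0.2 _ (by rw [hmval]; norm_num)]
      have he1 : (dg⁻¹ * (uGL x * wGL)).val 1 0 = 1 := by rw [hmval]; norm_num
      have he0 : (dg⁻¹ * (uGL x * wGL)).val 0 0 = u⁻¹ * x := by rw [hmval]; norm_num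
      rw [he1, he0, betaC_one, one_mul, div_one, hB2]
    set h2v := h0 - h1v with hh2v
    have hh2p : h2v ∈ p := Submodule.sub_mem p hh0p hh1p
    have hh2_1 : (h2v : Matrix.GeneralLinearGroup (Fin 2) F → ℂ) 1
        = 2 * (h0 : Matrix.GeneralLinearGroup (Fin 2) F → ℂ) 1 := by
      show (h0 : Matrix.GeneralLinearGroup (Fin 2) F → ℂ) 1
        - (h1v : Matrix.GeneralLinearGroup (Fin 2) F → ℂ) 1 = _
      rw [hC1, hβu]
      ring
    have hh2_w : ∀ x : F, (h2v : Matrix.GeneralLinearGroup (Fin 2) F → ℂ) (uGL x * wGL) = 0 := by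
      intro x
      show (h0 : Matrix.GeneralLinearGroup (Fin 2) F → ℂ) (uGL x * wGL)
        - (h1v : Matrix.GeneralLinearGroup (Fin 2) F → ℂ) (uGL x * wGL) = 0
      rw [hB2, hC2]
      ring
    have hc2ne : (2 : ℂ) * (h0 : Matrix.GeneralLinearGroup (Fin 2) F → ℂ) 1 ≠ 0 := by
      apply mul_ne_zero two_ne_zero
      rw [hB1]
      exact mul_ne_zero hFcard hf1ne
    -- h2v is a multiple of einf
    have hh2eq : h2v = (2 * (h0 : Matrix.GeneralLinearGroup (Fin 2) F → ℂ) 1) • einfE := by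
      apply Subtype.ext
      funext g
      show (h2v : Matrix.GeneralLinearGroup (Fin 2) F → ℂ) g = _
      rw [full_decomp h2v.2 g, hh2_1]
      have hz : ∀ x : F, (h2v : Matrix.GeneralLinearGroup (Fin 2) F → ℂ) (uGL x * wGL)
          * eAff x g = 0 := fun x => by rw [hh2_w x, zero_mul]
      rw [Finset.sum_congr rfl (fun x _ => hz x), Finset.sum_const_zero, add_zero]
      rfl
    have heinfp : einfE ∈ p := by
      have h := Submodule.smul_mem p (2 * (h0 : Matrix.GeneralLinearGroup (Fin 2) F → ℂ) 1)⁻¹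
        hh2p
      rw [hh2eq, smul_smul, inv_mul_cancel₀ hc2ne, one_smul] at h
      exact h
    -- Step D: conclude p = ⊤
    rw [Submodule.eq_top_iff']
    intro f
    have hrep := repDecomp f
    rw [← heinfE] at hrep
    rw [hrep]
    exact Submodule.add_mem p (Submodule.smul_mem p _ heinfp)
      (Submodule.sum_mem p (fun x _ => Submodule.smul_mem p _ (hpinv _ _ heinfp)))
section Rank2

lemma one_char_apply (k : ↥(unipotent F)) : ((1 : ↥(unipotent F) →* ℂ) k)⁻¹ = 1 := by
  simp

lemma unip_coe (b : F) : ((uU b : ↥(unipotent F)) : Matrix.GeneralLinearGroup (Fin 2) F)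
    = uGL b := rfl

/-- Principal series vectors are invariant under right translation by `U`. -/
lemma ps_right_u {f : Matrix.GeneralLinearGroup (Fin 2) F → ℂ}
    (hf : f ∈ indChar (borelSub F) (alphaQ F)) (g : Matrix.GeneralLinearGroup (Fin 2) F)
    (b : F) : f (g * uGL b) = f g := by
  have h := hf g ⟨uGL b, uGL_mem_borel b⟩
  rw [alphaQ_uGL, inv_one, one_mul] at h
  exact h

/-- The first intertwiner: the inclusion. -/
def A1map : ↥(indChar (borelSub F) (alphaQ F)) →ₗ[ℂ]
    (Matrix.GeneralLinearGroup (Fin 2) F → ℂ) := (indChar (borelSub F) (alphaQ F)).subtype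

lemma A1_mem : A1map ∈ homGIndChar (unipotent F) (1 : ↥(unipotent F) →* ℂ)
    (indRep (borelSub F) (alphaQ F)) := by
  constructor
  · intro w g k
    rw [one_char_apply, one_mul]
    obtain ⟨b, rfl⟩ := unipotent_elt k
    exact ps_right_u w.2 g b
  · intro g w
    rfl

/-- The second intertwiner: integration over the big cell. -/
def A2map : ↥(indChar (borelSub F) (alphaQ F)) →ₗ[ℂ]
    (Matrix.GeneralLinearGroup (Fin 2) F → ℂ) where
  toFun f := fun g => ∑ t : F, (f : Matrix.GeneralLinearGroup (Fin 2) F → ℂ) (g * (uGL t * wGL))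
  map_add' f f' := by
    funext g
    have h : ∀ t : F, ((f + f' : ↥(indChar (borelSub F) (alphaQ F))) :
        Matrix.GeneralLinearGroup (Fin 2) F → ℂ) (g * (uGL t * wGL))
        = (f : Matrix.GeneralLinearGroup (Fin 2) F → ℂ) (g * (uGL t * wGL))
          + (f' : Matrix.GeneralLinearGroup (Fin 2) F → ℂ) (g * (uGL t * wGL)) := fun t => rfl
    show ∑ t : F, ((f + f' : ↥(indChar (borelSub F) (alphaQ F))) :
        Matrix.GeneralLinearGroup (Fin 2) F → ℂ) (g * (uGL t * wGL)) = _
    rw [Finset.sum_congr rfl (fun t _ => h t), Finset.sum_add_distrib]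
    rfl
  map_smul' c f := by
    funext g
    have h : ∀ t : F, ((c • f : ↥(indChar (borelSub F) (alphaQ F))) :
        Matrix.GeneralLinearGroup (Fin 2) F → ℂ) (g * (uGL t * wGL))
        = c * (f : Matrix.GeneralLinearGroup (Fin 2) F → ℂ) (g * (uGL t * wGL)) := fun t => rfl
    show ∑ t : F, ((c • f : ↥(indChar (borelSub F) (alphaQ F))) :
        Matrix.GeneralLinearGroup (Fin 2) F → ℂ) (g * (uGL t * wGL)) = _
    rw [Finset.sum_congr rfl (fun t _ => h t), ← Finset.mul_sum]
    rfl

lemma A2_apply (f : ↥(indChar (borelSub F) (alphaQ F)))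
    (g : Matrix.GeneralLinearGroup (Fin 2) F) :
    A2map f g = ∑ t : F, (f : Matrix.GeneralLinearGroup (Fin 2) F → ℂ) (g * (uGL t * wGL)) :=
  rfl

lemma A2_mem : A2map ∈ homGIndChar (unipotent F) (1 : ↥(unipotent F) →* ℂ)
    (indRep (borelSub F) (alphaQ F)) := by
  constructor
  · intro w g k
    rw [one_char_apply, one_mul]
    obtain ⟨b, rfl⟩ := unipotent_elt k
    rw [A2_apply, A2_apply]
    apply Fintype.sum_equiv (Equiv.addLeft b)
    intro t
    show (w : Matrix.GeneralLinearGroup (Fin 2) F → ℂ) (g * uGL b * (uGL t * wGL))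
      = (w : Matrix.GeneralLinearGroup (Fin 2) F → ℂ) (g * (uGL (b + t) * wGL))
    congr 1
    rw [mul_assoc, ← mul_assoc (uGL b), uGL_mul]
  · intro g w
    funext y
    rw [A2_apply]
    show _ = A2map w (g⁻¹ * y)
    rw [A2_apply]
    apply Finset.sum_congr rfl
    intro t _
    show translate g (w : Matrix.GeneralLinearGroup (Fin 2) F → ℂ) (y * (uGL t * wGL)) = _
    show (w : Matrix.GeneralLinearGroup (Fin 2) F → ℂ) (g⁻¹ * (y * (uGL t * wGL))) = _
    rw [mul_assoc]

lemma einf_uw (t : F) : einf F (uGL t * wGL) = 0 := by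
  unfold einf
  rw [if_neg]
  rw [uw_val]
  norm_num

lemma wuw_val (t : F) : (wGL * (uGL t * wGL)).val = !![1, 0; t, 1] := by
  rw [Units.val_mul, uw_val]
  show (!![0, 1; 1, 0] : Matrix (Fin 2) (Fin 2) F) * !![t, 1; 1, 0] = _
  ext i j
  fin_cases i <;> fin_cases j <;> simp [Matrix.mul_apply, Fin.sum_univ_two]

lemma ev_A1_1 : A1map (⟨einf F, einf_mem⟩ : ↥(indChar (borelSub F) (alphaQ F))) 1 = 1 :=
  einf_one

lemma ev_A1_w : A1map (⟨einf F, einf_mem⟩ : ↥(indChar (borelSub F) (alphaQ F))) wGL = 0 := by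
  show einf F wGL = 0
  unfold einf
  rw [if_neg]
  show ¬(wGL : Matrix.GeneralLinearGroup (Fin 2) F).val 1 0 = 0
  show ¬(1 : F) = 0
  exact one_ne_zero

lemma ev_A2_1 : A2map (⟨einf F, einf_mem⟩ : ↥(indChar (borelSub F) (alphaQ F))) 1 = 0 := by
  rw [A2_apply]
  apply Finset.sum_eq_zero
  intro t _
  rw [one_mul]
  exact einf_uw t

lemma ev_A2_w : A2map (⟨einf F, einf_mem⟩ : ↥(indChar (borelSub F) (alphaQ F))) wGL = 1 := by
  rw [A2_apply]
  have hterm : ∀ t : F, einf F (wGL * (uGL t * wGL)) = if t = 0 then 1 else 0 := by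
    intro t
    unfold einf
    have h10 : (wGL * (uGL t * wGL)).val 1 0 = t := by rw [wuw_val]; norm_num
    have h00 : (wGL * (uGL t * wGL)).val 0 0 = 1 := by rw [wuw_val]; norm_num
    by_cases ht : t = 0
    · rw [if_pos ht, if_pos (by rw [h10]; exact ht), h00, betaC_one]
    · rw [if_neg ht, if_neg (by rw [h10]; exact ht)]
  rw [Finset.sum_congr rfl (fun t _ => hterm t)]
  simp

end Rank2
/-- Every intertwiner from the principal series to `Ind_U^G 1` is a combination of the two. -/
theorem hom_span (B : ↥(indChar (borelSub F) (alphaQ F)) →ₗ[ℂ]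
      (Matrix.GeneralLinearGroup (Fin 2) F → ℂ))
    (hB : B ∈ homGIndChar (unipotent F) (1 : ↥(unipotent F) →* ℂ)
      (indRep (borelSub F) (alphaQ F))) :
    B = (B ⟨einf F, einf_mem⟩ 1) • A1map
      + (B (indRep (borelSub F) (alphaQ F) wGL ⟨einf F, einf_mem⟩) 1) • A2map := by
  have hBval : ∀ (v : ↥(indChar (borelSub F) (alphaQ F)))
      (g : Matrix.GeneralLinearGroup (Fin 2) F),
      B v g = B (indRep (borelSub F) (alphaQ F) g⁻¹ v) 1 := by
    intro v g
    rw [hB.2 g⁻¹ v]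
    show B v g = B v (g⁻¹⁻¹ * 1)
    rw [inv_inv, mul_one]
  have hInv : ∀ (t : F) (v : ↥(indChar (borelSub F) (alphaQ F))),
      B (indRep (borelSub F) (alphaQ F) (uGL t) v) 1 = B v 1 := by
    intro t v
    rw [hB.2 (uGL t) v]
    show B v ((uGL t)⁻¹ * 1) = B v 1
    rw [uGL_inv, mul_one]
    have h := hB.1 v 1 (uU (-t))
    rw [one_char_apply, one_mul, one_mul] at h
    exact h
  apply LinearMap.ext
  intro v
  funext g
  have hd := repDecomp (indRep (borelSub F) (alphaQ F) g⁻¹ v)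
  have hstep : B v g
      = ((indRep (borelSub F) (alphaQ F) g⁻¹ v :
          ↥(indChar (borelSub F) (alphaQ F))) : Matrix.GeneralLinearGroup (Fin 2) F → ℂ) 1
          * B ⟨einf F, einf_mem⟩ 1
        + ∑ x : F, ((indRep (borelSub F) (alphaQ F) g⁻¹ v :
            ↥(indChar (borelSub F) (alphaQ F))) : Matrix.GeneralLinearGroup (Fin 2) F → ℂ)
            (uGL x * wGL)
          * B (indRep (borelSub F) (alphaQ F) (uGL x * wGL) ⟨einf F, einf_mem⟩) 1 := by
    rw [hBval v g]
    conv_lhs => rw [hd]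
    rw [map_add, map_smul, map_sum, Pi.add_apply, Pi.smul_apply, smul_eq_mul,
      Finset.sum_apply]
    congr 1
    apply Finset.sum_congr rfl
    intro x _
    rw [map_smul, Pi.smul_apply, smul_eq_mul]
  have hterm2 : ∀ x : F,
      B (indRep (borelSub F) (alphaQ F) (uGL x * wGL) ⟨einf F, einf_mem⟩) 1
      = B (indRep (borelSub F) (alphaQ F) wGL ⟨einf F, einf_mem⟩) 1 := by
    intro x
    have h := sigma_mul_apply (indRep (borelSub F) (alphaQ F)) (uGL x) wGL
      (⟨einf F, einf_mem⟩ : ↥(indChar (borelSub F) (alphaQ F)))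
    rw [h, hInv]
  have hval1 : ((indRep (borelSub F) (alphaQ F) g⁻¹ v :
      ↥(indChar (borelSub F) (alphaQ F))) : Matrix.GeneralLinearGroup (Fin 2) F → ℂ) 1
      = (v : Matrix.GeneralLinearGroup (Fin 2) F → ℂ) g := by
    show (v : Matrix.GeneralLinearGroup (Fin 2) F → ℂ) (g⁻¹⁻¹ * 1) = _
    rw [inv_inv, mul_one]
  have hval2 : ∀ x : F, ((indRep (borelSub F) (alphaQ F) g⁻¹ v :
      ↥(indChar (borelSub F) (alphaQ F))) : Matrix.GeneralLinearGroup (Fin 2) F → ℂ)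
      (uGL x * wGL)
      = (v : Matrix.GeneralLinearGroup (Fin 2) F → ℂ) (g * (uGL x * wGL)) := by
    intro x
    show (v : Matrix.GeneralLinearGroup (Fin 2) F → ℂ) (g⁻¹⁻¹ * (uGL x * wGL)) = _
    rw [inv_inv]
  rw [hstep, Finset.sum_congr rfl (fun x _ => by rw [hterm2 x, hval2 x]), hval1]
  show _ = ((B ⟨einf F, einf_mem⟩ 1) • A1map v
      + (B (indRep (borelSub F) (alphaQ F) wGL ⟨einf F, einf_mem⟩) 1) • A2map v) g
  rw [Pi.add_apply, Pi.smul_apply, Pi.smul_apply, smul_eq_mul, smul_eq_mul, A2_apply,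
    Finset.mul_sum]
  show (v : Matrix.GeneralLinearGroup (Fin 2) F → ℂ) g * B ⟨einf F, einf_mem⟩ 1 + _ = _
  congr 1
  · show _ = B ⟨einf F, einf_mem⟩ 1 * (v : Matrix.GeneralLinearGroup (Fin 2) F → ℂ) g
    ring
  · apply Finset.sum_congr rfl
    intro x _
    ring

/-- The multiplicity of the principal series in `Ind_U^G 1` is exactly `2`. -/
theorem rank_two : Module.finrank ℂ ↥(homGIndChar (unipotent F) (1 : ↥(unipotent F) →* ℂ)
    (indRep (borelSub F) (alphaQ F))) = 2 := by
  have hc2eq : ∀ (B : ↥(indChar (borelSub F) (alphaQ F)) →ₗ[ℂ]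
      (Matrix.GeneralLinearGroup (Fin 2) F → ℂ)),
      B ∈ homGIndChar (unipotent F) (1 : ↥(unipotent F) →* ℂ)
        (indRep (borelSub F) (alphaQ F)) →
      B ⟨einf F, einf_mem⟩ wGL
        = B (indRep (borelSub F) (alphaQ F) wGL ⟨einf F, einf_mem⟩) 1 := by
    intro B hB
    conv_lhs => rw [hom_span B hB]
    rw [LinearMap.add_apply, LinearMap.smul_apply, LinearMap.smul_apply, Pi.add_apply,
      Pi.smul_apply, Pi.smul_apply, smul_eq_mul, smul_eq_mul, ev_A1_w, ev_A2_w]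
    ring
  set H₀ := homGIndChar (unipotent F) (1 : ↥(unipotent F) →* ℂ)
    (indRep (borelSub F) (alphaQ F)) with hH₀
  set EV : ↥H₀ →ₗ[ℂ] ℂ × ℂ :=
    { toFun := fun B => (B.1 ⟨einf F, einf_mem⟩ 1, B.1 ⟨einf F, einf_mem⟩ wGL)
      map_add' := fun B B' => rfl
      map_smul' := fun c B => rfl } with hEV
  have hinj : Function.Injective EV := by
    rw [injective_iff_map_eq_zero]
    intro B hB0
    have h1 : B.1 ⟨einf F, einf_mem⟩ 1 = 0 := congrArg Prod.fst hB0
    have h2 : B.1 ⟨einf F, einf_mem⟩ wGL = 0 := congrArg Prod.snd hB0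
    apply Subtype.ext
    rw [hom_span B.1 B.2, ← hc2eq B.1 B.2, h1, h2]
    simp
  have hsurj : Function.Surjective EV := by
    intro z
    set Bz : ↥(indChar (borelSub F) (alphaQ F)) →ₗ[ℂ]
        (Matrix.GeneralLinearGroup (Fin 2) F → ℂ) := z.1 • A1map + z.2 • A2map with hBz
    refine ⟨⟨Bz, Submodule.add_mem _
      (Submodule.smul_mem _ _ A1_mem) (Submodule.smul_mem _ _ A2_mem)⟩, ?_⟩
    have e1 : Bz ⟨einf F, einf_mem⟩ 1 = z.1 := by
      rw [hBz, LinearMap.add_apply, LinearMap.smul_apply, LinearMap.smul_apply, Pi.add_apply,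
        Pi.smul_apply, Pi.smul_apply, smul_eq_mul, smul_eq_mul, ev_A1_1, ev_A2_1]
      ring
    have e2 : Bz ⟨einf F, einf_mem⟩ wGL = z.2 := by
      rw [hBz, LinearMap.add_apply, LinearMap.smul_apply, LinearMap.smul_apply, Pi.add_apply,
        Pi.smul_apply, Pi.smul_apply, smul_eq_mul, smul_eq_mul, ev_A1_w, ev_A2_w]
      ring
    show (Bz ⟨einf F, einf_mem⟩ 1, Bz ⟨einf F, einf_mem⟩ wGL) = z
    rw [e1, e2]
  have he : ↥H₀ ≃ₗ[ℂ] ℂ × ℂ := LinearEquiv.ofBijective EV ⟨hinj, hsurj⟩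
  rw [he.finrank_eq, Module.finrank_prod, Module.finrank_self]
variable (F)

/-- Let `q` be an odd prime power, `G = GL(2,F_q)` and `U` the unipotent
subgroup.  Then `(G,U,χ)` is a multiplicity-free triple for every nontrivial character `χ` of
`U`, but `(G,U)` is not a Gelfand pair: `Ind_U^G χ₀` (for the trivial character `χ₀`) is not
multiplicity-free — indeed some irreducible representation of `G` occurs in it with
multiplicity `2`. -/
theorem statement18 (hodd : Odd (Fintype.card F)) :
    (∀ χ : ↥(unipotent F) →* ℂ, χ ≠ 1 → IsMultFreeChar (unipotent F) χ) ∧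
    ¬ IsMultFreeChar (unipotent F) (1 : ↥(unipotent F) →* ℂ) ∧
    ∃ r : RepWitness (Matrix.GeneralLinearGroup (Fin 2) F), IsIrreducibleRep r.σ ∧
      Module.finrank ℂ ↥(homGIndChar (unipotent F) (1 : ↥(unipotent F) →* ℂ) r.σ) = 2 := by
  refine ⟨fun χ hχ => isMultFreeChar_of_tau (unipotent F) χ tauGL tau_anti tau_invol
    (fun φ hφ g => hfix_gl2 hχ φ hφ g), ?_, ?_⟩
  · intro h
    have h2 := h (↥(indChar (borelSub F) (alphaQ F))) (indRep (borelSub F) (alphaQ F))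
      (psIrr hodd)
    rw [rank_two] at h2
    omega
  · exact ⟨{ W := ↥(indChar (borelSub F) (alphaQ F)), σ := indRep (borelSub F) (alphaQ F) },
      psIrr hodd, rank_two⟩

end GLMF
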